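/- For n ≥ 1, the monoid End P_n is regular (every element is regular) if and only if n ≤ 5. -/

import Mathlib

/-- `α` is a weak endomorphism of the path `P_n` (with vertices `0,…,n-1` standing for
`1,…,n`): `|iα - (i+1)α| ≤ 1` for all consecutive pairs of vertices. -/
def IsWEndo {n : ℕ} (f : Function.End (Fin n)) : Prop :=
  ∀ i : ℕ, ∀ h : i + 1 < n,
    |(((f ⟨i, by omega⟩ : Fin n) : ℕ) : ℤ) - (((f ⟨i + 1, h⟩ : Fin n) : ℕ) : ℤ)| ≤ 1

/-- `α` is an endomorphism of the path `P_n`: `|iα - (i+1)α| = 1` for all consecutive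
pairs of vertices. -/
def IsEndo {n : ℕ} (f : Function.End (Fin n)) : Prop :=
  ∀ i : ℕ, ∀ h : i + 1 < n,
    |(((f ⟨i, by omega⟩ : Fin n) : ℕ) : ℤ) - (((f ⟨i + 1, h⟩ : Fin n) : ℕ) : ℤ)| = 1

/-- Two vertices of the path are adjacent. -/
def adjPath {n : ℕ} (x y : Fin n) : Prop := (x : ℕ) + 1 = (y : ℕ) ∨ (y : ℕ) + 1 = (x : ℕ)

instance {n : ℕ} (x y : Fin n) : Decidable (adjPath x y) := by
  unfold adjPath; infer_instance

lemma isEndo_iff_adj {n : ℕ} (f : Function.End (Fin n)) :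
    IsEndo f ↔ ∀ i : ℕ, ∀ h : i + 1 < n, adjPath (f ⟨i, by omega⟩) (f ⟨i + 1, h⟩) := by
  unfold IsEndo adjPath
  constructor
  · intro h i hi
    have h2 := h i hi
    rw [abs_eq (by norm_num : (0:ℤ) ≤ 1)] at h2
    omega
  · intro h i hi
    have h2 := h i hi
    rw [abs_eq (by norm_num : (0:ℤ) ≤ 1)]
    omega

/-- A proof-term-free version of the endomorphism condition, for deciding. -/
def Endo2 (n : ℕ) (f : Fin n → Fin n) : Prop :=
  ∀ i : Fin (n - 1), adjPath (f ⟨i.1, by omega⟩) (f ⟨i.1 + 1, by omega⟩)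

instance (n : ℕ) (f : Fin n → Fin n) : Decidable (Endo2 n f) := by
  unfold Endo2; infer_instance

lemma isEndo_iff_endo2 {n : ℕ} (f : Function.End (Fin n)) : IsEndo f ↔ Endo2 n f := by
  rw [isEndo_iff_adj]
  constructor
  · intro h i
    exact h i.1 (by omega)
  · intro h i hi
    exact h ⟨i, by omega⟩

/-- Every endomorphism of `P_n` is regular (decidable form for small `n`). -/
def RegAllP (n : ℕ) : Prop :=
  ∀ f : Fin n → Fin n, Endo2 n f →
    ∃ g : Fin n → Fin n, Endo2 n g ∧ ∀ x, f (g (f x)) = f x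

instance (n : ℕ) : Decidable (RegAllP n) := by unfold RegAllP; infer_instance

/-- Regularity check for `n = 5`, phrased with nested quantifiers to keep kernel
recursion shallow. -/
def Q5 : Prop := ∀ a b c d e : Fin 5,
    (adjPath a b ∧ adjPath b c ∧ adjPath c d ∧ adjPath d e) →
  ∃ a' b' c' d' e' : Fin 5,
    (adjPath a' b' ∧ adjPath b' c' ∧ adjPath c' d' ∧ adjPath d' e') ∧
    ∀ x, ![a,b,c,d,e] (![a',b',c',d',e'] (![a,b,c,d,e] x)) = ![a,b,c,d,e] x

instance : Decidable Q5 := by unfold Q5; infer_instance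

set_option maxRecDepth 10000 in
lemma regAllP_small : RegAllP 1 ∧ RegAllP 2 ∧ RegAllP 3 ∧ RegAllP 4 :=
  ⟨by decide, by decide, by decide, by decide⟩

set_option maxRecDepth 10000 in
set_option maxHeartbeats 4000000 in
lemma q5_holds : Q5 := by decide

/-- The counterexample pattern for `n ≥ 6`. -/
def Fpat (i : ℕ) : ℕ :=
  if i = 0 then 1 else if i = 1 then 2 else if i = 2 then 3 else if i = 3 then 2
  else 3 + i % 2

lemma Fpat_le (i : ℕ) : Fpat i ≤ 4 := by
  unfold Fpat; split_ifs <;> first | (exfalso; assumption) | omega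

lemma Fpat_adj (i : ℕ) : Fpat i + 1 = Fpat (i + 1) ∨ Fpat (i + 1) + 1 = Fpat i := by
  unfold Fpat; split_ifs <;> first | (exfalso; assumption) | omega

lemma Fpat_eq_one {j : ℕ} (h : Fpat j = 1) : j = 0 := by
  unfold Fpat at h; split_ifs at h <;> first | (exfalso; assumption) | omega

lemma Fpat_eq_two {j : ℕ} (h : Fpat j = 2) : j = 1 ∨ j = 3 := by
  unfold Fpat at h; split_ifs at h <;> first | (exfalso; assumption) | omega

lemma Fpat_eq_three {j : ℕ} (h : Fpat j = 3) : j = 2 ∨ 4 ≤ j := by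
  unfold Fpat at h; split_ifs at h <;> first | (exfalso; assumption) | omega

lemma Fpat_eq_four {j : ℕ} (h : Fpat j = 4) : 5 ≤ j := by
  unfold Fpat at h; split_ifs at h <;> first | (exfalso; assumption) | omega

lemma not_regular_of_six_le {n : ℕ} (hn : 6 ≤ n) :
    ¬ (∀ f : Function.End (Fin n), IsEndo f →
        ∃ g : Function.End (Fin n), IsEndo g ∧ f * g * f = f) := by
  intro H
  set f : Function.End (Fin n) := fun i => ⟨Fpat i.1, by have := Fpat_le i.1; omega⟩ with hf
  have hfe : IsEndo f := by
    rw [isEndo_iff_adj]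
    intro i hi
    exact Fpat_adj i
  obtain ⟨g, hge, hfgf⟩ := H f hfe
  have hx : ∀ x, f (g (f x)) = f x := fun x => congrFun hfgf x
  have hgadj := (isEndo_iff_adj g).1 hge
  have h1n : (1 : ℕ) < n := by omega
  have h2n : (2 : ℕ) < n := by omega
  have h3n : (3 : ℕ) < n := by omega
  have h4n : (4 : ℕ) < n := by omega
  have key : ∀ k (hk : k < n) (hk' : Fpat k < n),
      Fpat ((g ⟨Fpat k, hk'⟩ : Fin n) : ℕ) = Fpat k := fun k hk hk' =>
    congrArg Fin.val (hx ⟨k, hk⟩)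
  have k1 : (g ⟨1, h1n⟩ : Fin n).1 = 0 := Fpat_eq_one (key 0 (by omega) h1n)
  have k2 : (g ⟨2, h2n⟩ : Fin n).1 = 1 ∨ (g ⟨2, h2n⟩ : Fin n).1 = 3 :=
    Fpat_eq_two (key 1 (by omega) h2n)
  have k3 : (g ⟨3, h3n⟩ : Fin n).1 = 2 ∨ 4 ≤ (g ⟨3, h3n⟩ : Fin n).1 :=
    Fpat_eq_three (key 2 (by omega) h3n)
  have k4 : 5 ≤ (g ⟨4, h4n⟩ : Fin n).1 := Fpat_eq_four (key 5 (by omega) h4n)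
  have a12 : adjPath (g ⟨1, h1n⟩) (g ⟨2, h2n⟩) := hgadj 1 h2n
  have a23 : adjPath (g ⟨2, h2n⟩) (g ⟨3, h3n⟩) := hgadj 2 h3n
  have a34 : adjPath (g ⟨3, h3n⟩) (g ⟨4, h4n⟩) := hgadj 3 h4n
  unfold adjPath at a12 a23 a34
  omega

/-- The monoid `End P_n` is regular if and only if `n ≤ 5`. -/
theorem End_path_regular_iff (n : ℕ) (hn : 1 ≤ n) :
    (∀ f : Function.End (Fin n), IsEndo f →
        ∃ g : Function.End (Fin n), IsEndo g ∧ f * g * f = f) ↔ n ≤ 5 := by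
  constructor
  · intro H
    by_contra h
    exact not_regular_of_six_le (by omega) H
  · intro hn5
    obtain ⟨r1, r2, r3, r4⟩ := regAllP_small
    interval_cases n
    · intro f hf
      obtain ⟨g, hg, hc⟩ := r1 f ((isEndo_iff_endo2 f).1 hf)
      exact ⟨g, (isEndo_iff_endo2 g).2 hg, funext hc⟩
    · intro f hf
      obtain ⟨g, hg, hc⟩ := r2 f ((isEndo_iff_endo2 f).1 hf)
      exact ⟨g, (isEndo_iff_endo2 g).2 hg, funext hc⟩
    · intro f hf
      obtain ⟨g, hg, hc⟩ := r3 f ((isEndo_iff_endo2 f).1 hf)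
      exact ⟨g, (isEndo_iff_endo2 g).2 hg, funext hc⟩
    · intro f hf
      obtain ⟨g, hg, hc⟩ := r4 f ((isEndo_iff_endo2 f).1 hf)
      exact ⟨g, (isEndo_iff_endo2 g).2 hg, funext hc⟩
    · intro f hf
      have hadj := (isEndo_iff_adj f).1 hf
      have hfv : f = ![f 0, f 1, f 2, f 3, f 4] := by
        funext x; fin_cases x <;> rfl
      have c01 : adjPath (f 0) (f 1) := hadj 0 (by omega)
      have c12 : adjPath (f 1) (f 2) := hadj 1 (by omega)
      have c23 : adjPath (f 2) (f 3) := hadj 2 (by omega)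
      have c34 : adjPath (f 3) (f 4) := hadj 3 (by omega)
      obtain ⟨a', b', c', d', e', ⟨g01, g12, g23, g34⟩, hc⟩ :=
        q5_holds (f 0) (f 1) (f 2) (f 3) (f 4) ⟨c01, c12, c23, c34⟩
      refine ⟨![a', b', c', d', e'], ?_, ?_⟩
      · refine (isEndo_iff_adj _).2 ?_
        intro i hi
        rcases i with _|_|_|_|i
        · exact g01
        · exact g12
        · exact g23
        · exact g34
        · omega
      · rw [hfv]
        exact funext hc
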